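/- Both ρ₀ and ρ₁ are positive definite 4×4 matrices (in particular they have full and identical support, so unambiguous discrimination between them is impossible). -/

import Mathlib

open Matrix Complex Kronecker BigOperators ComplexOrder

noncomputable section

abbrev Mat2 := Matrix (Fin 2) (Fin 2) ℂ
abbrev Mat4 := Matrix (Fin 2 × Fin 2) (Fin 2 × Fin 2) ℂ

/-- Pauli X matrix -/
def PX : Mat2 := !![0, 1; 1, 0]

/-- Pauli Y matrix -/
def PY : Mat2 := !![0, -Complex.I; Complex.I, 0]

/-- sign (−1)^b for a bit b -/
def bsign (b : Bool) : ℂ := if b then -1 else 1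

/-- boolean function f(x̄,ȳ) = (x₁·y₁) XOR x₂ XOR y₂ -/
def fxy (x y : Bool × Bool) : Bool := (((x.1 && y.1)).xor x.2).xor y.2

/-- qubit input states ω_{x̄}: ω_{(0,x₂)} = (I+(−1)^{x₂}X)/2, ω_{(1,x₂)} = (I+(−1)^{x₂}Y)/2 -/
def omg (x : Bool × Bool) : Mat2 :=
  (1/2 : ℂ) • ((1 : Mat2) + bsign x.2 • (if x.1 then PY else PX))

/-- qubit input states τ_{ȳ} = (I+(−1)^{y₂}(X+(−1)^{y₁}Y)/√2)/2 -/
def tau (y : Bool × Bool) : Mat2 :=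
  (1/2 : ℂ) • ((1 : Mat2) + (bsign y.2 / (Real.sqrt 2 : ℂ)) • (PX + bsign y.1 • PY))

/-- averaged input states ρ₀ (for c = false) and ρ₁ (for c = true) -/
def rho (c : Bool) : Mat4 :=
  (1/8 : ℂ) • ∑ x : Bool × Bool, ∑ y : Bool × Bool,
    (if fxy x y = c then omg x ⊗ₖ tau y else 0)

/-- standard basis vectors of ℂ⁴ ≅ ℂ² ⊗ ℂ² -/
def ket (i j : Fin 2) : (Fin 2 × Fin 2) → ℂ := fun p => if p = (i, j) then 1 else 0

def PhiP : (Fin 2 × Fin 2) → ℂ := fun p => (1 / (Real.sqrt 2 : ℂ)) * (ket 0 0 p + ket 1 1 p)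
def PhiM : (Fin 2 × Fin 2) → ℂ := fun p => (1 / (Real.sqrt 2 : ℂ)) * (ket 0 0 p - ket 1 1 p)
def PsiP : (Fin 2 × Fin 2) → ℂ := fun p => (1 / (Real.sqrt 2 : ℂ)) * (ket 0 1 p + ket 1 0 p)
def PsiM : (Fin 2 × Fin 2) → ℂ := fun p => (1 / (Real.sqrt 2 : ℂ)) * (ket 0 1 p - ket 1 0 p)

/-- rank one projector |v⟩⟨v| -/
def proj (v : (Fin 2 × Fin 2) → ℂ) : Mat4 := Matrix.vecMulVec v (star v)

/-- a γ-admissible measurement triple -/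
def Admissible (γ : ℝ) (P0 P1 Pe : Mat4) : Prop :=
  P0.PosSemidef ∧ P1.PosSemidef ∧ Pe.PosSemidef ∧
  P0 + P1 + Pe = 1 ∧
  ∀ x y : Bool × Bool, ((omg x ⊗ₖ tau y) * Pe).trace = 1 - (γ : ℂ)^2

/-- guessing value V = (1/2)·Tr[ρ₀Π₀ + ρ₁Π₁] (a real number) -/
def Gval (P0 P1 : Mat4) : ℝ := (1/2) * ((rho false * P0 + rho true * P1).trace).re

set_option maxHeartbeats 4000000 in
lemma rho_apply (c : Bool) (i j : Fin 2 × Fin 2) : rho c i j =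
    (1/4 : ℂ) * (if i = j then 1 else 0) +
    (bsign c * (Real.sqrt 2/8 : ℝ)) *
      (if (i = (0,1) ∧ j = (1,0)) ∨ (i = (1,0) ∧ j = (0,1)) then 1 else 0) := by
  have hsqC : (Real.sqrt 2 : ℂ) * (Real.sqrt 2 : ℂ) = 2 := by
    rw [← Complex.ofReal_mul, Real.mul_self_sqrt (by norm_num)]; norm_num
  have h2 : (Real.sqrt 2 : ℂ) ≠ 0 := by
    intro h; rw [h] at hsqC; simp at hsqC
  fin_cases c <;> fin_cases i <;> fin_cases j <;>
  · simp only [rho, Matrix.smul_apply, Matrix.sum_apply, Fintype.sum_prod_type, Fintype.sum_bool]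
    simp [fxy, omg, tau, bsign, PX, PY, Matrix.kroneckerMap_apply, Matrix.one_apply, Prod.ext_iff]
    all_goals try ring_nf
    all_goals try simp only [Complex.I_sq]
    all_goals try field_simp
    all_goals first
    | rfl
    | ring1
    | linear_combination hsqC
    | linear_combination -hsqC
    | linear_combination 2*hsqC
    | linear_combination -2*hsqC
    | linear_combination hsqC/8
    | linear_combination -hsqC/8
    | linear_combination 8*hsqC
    | linear_combination -8*hsqC

set_option maxHeartbeats 1000000 in
lemma rho_pd (c : Bool) : (rho c).PosDef := by
  have hs : (0:ℝ) < Real.sqrt 2 := Real.sqrt_pos.2 (by norm_num)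
  have hsq : Real.sqrt 2 * Real.sqrt 2 = 2 := Real.mul_self_sqrt (by norm_num)
  refine Matrix.posDef_iff_dotProduct_mulVec.mpr ⟨?_, ?_⟩
  · ext i j
    rw [Matrix.conjTranspose_apply, rho_apply, rho_apply]
    fin_cases c <;> fin_cases i <;> fin_cases j <;>
      try norm_num [bsign, Prod.ext_iff]
  · intro x hx
    have hq : dotProduct (star x) ((rho c) *ᵥ x) =
        ∑ i, ∑ j, (starRingEnd ℂ) (x i) * rho c i j * x j := by
      simp [dotProduct, Matrix.mulVec, Finset.mul_sum, mul_assoc]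
    have hexp : (∑ i, ∑ j, (starRingEnd ℂ) (x i) * rho c i j * x j) =
        (1/4 : ℂ) * ((starRingEnd ℂ) (x (0,0)) * x (0,0) + (starRingEnd ℂ) (x (0,1)) * x (0,1) +
          (starRingEnd ℂ) (x (1,0)) * x (1,0) + (starRingEnd ℂ) (x (1,1)) * x (1,1)) +
        ((bsign c * (Real.sqrt 2/8 : ℝ)) *
          ((starRingEnd ℂ) (x (0,1)) * x (1,0) + (starRingEnd ℂ) (x (1,0)) * x (0,1))) := by
      simp only [Fintype.sum_prod_type, Fin.sum_univ_two, rho_apply]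
      norm_num [Prod.ext_iff]
      try simp only [Prod.mk_zero_zero, Prod.mk_one_one]
      try ring
    have hpos : (0:ℝ) < ∑ j, Complex.normSq (x j) := by
      obtain ⟨i, hi⟩ : ∃ i, x i ≠ 0 := by
        by_contra h; push_neg at h; exact hx (funext h)
      exact Finset.sum_pos' (fun j _ => Complex.normSq_nonneg _)
        ⟨i, Finset.mem_univ i, Complex.normSq_pos.2 hi⟩
    have hsum : (∑ j, Complex.normSq (x j)) =
        Complex.normSq (x (0,0)) + Complex.normSq (x (0,1)) +
        Complex.normSq (x (1,0)) + Complex.normSq (x (1,1)) := by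
      simp [Fintype.sum_prod_type, Fin.sum_univ_two]; ring
    rw [hsum] at hpos
    simp only [Complex.normSq_apply] at hpos
    rw [hq, hexp, Complex.lt_def]
    constructor
    · fin_cases c <;>
      · simp only [bsign]
        norm_num [Complex.add_re, Complex.mul_re, Complex.mul_im, Complex.conj_re,
          Complex.conj_im, Complex.ofReal_re, Complex.ofReal_im]
        try simp only [Prod.mk_zero_zero, Prod.mk_one_one] at hpos ⊢
        nlinarith [hpos, hs, hsq,
          sq_nonneg ((x (0,1)).re + (x (1,0)).re), sq_nonneg ((x (0,1)).im + (x (1,0)).im),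
          sq_nonneg ((x (0,1)).re - (x (1,0)).re), sq_nonneg ((x (0,1)).im - (x (1,0)).im),
          sq_nonneg (Real.sqrt 2 - 3/2),
          mul_nonneg hs.le (sq_nonneg ((x (0,1)).re + (x (1,0)).re)),
          mul_nonneg hs.le (sq_nonneg ((x (0,1)).im + (x (1,0)).im)),
          mul_nonneg hs.le (sq_nonneg ((x (0,1)).re - (x (1,0)).re)),
          mul_nonneg hs.le (sq_nonneg ((x (0,1)).im - (x (1,0)).im))]
    · fin_cases c <;>
      · simp only [bsign]
        norm_num [Complex.add_im, Complex.mul_re, Complex.mul_im, Complex.conj_re,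
          Complex.conj_im, Complex.ofReal_re, Complex.ofReal_im]
        try ring

/-- both ρ₀ and ρ₁ are positive definite 4×4 matrices. -/
theorem rho_posdef : (rho false).PosDef ∧ (rho true).PosDef := by
  exact ⟨rho_pd false, rho_pd true⟩
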